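/- Let V: (0, a/2] → (0, ∞) be differentiable with (n − Cζ)V(ζ) ≤ ζ V'(ζ) for all ζ ∈ (0, a/2], where C > 0, and suppose lim_{ε→0⁺} V(ε)/ε^n = ω_n > 0. Then V(ζ) ≥ ω_n ζ^n e^{-Cζ} for all 0 < ζ ≤ a/2. -/

import Mathlib

open Set Real Filter

/-- **Volume lower bound from the differential inequality and the asymptotic
density at the center.**  If a positive differentiable `V` on `(0, a/2]`
satisfies `(n − Cζ)V(ζ) ≤ ζ V'(ζ)` there, `C > 0`, and
`V(ε)/ε^n → ω_n > 0` as `ε → 0⁺`, then `V(ζ) ≥ ω_n ζ^n e^{-Cζ}`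
for all `0 < ζ ≤ a/2`. -/
theorem volume_lower_bound
    (n : ℕ) (hn : 0 < n) (C a ωn : ℝ) (hC : 0 < C) (ha : 0 < a) (hω : 0 < ωn)
    (V V' : ℝ → ℝ)
    (hpos : ∀ ζ ∈ Set.Ioc (0 : ℝ) (a / 2), 0 < V ζ)
    (hderiv : ∀ ζ ∈ Set.Ioc (0 : ℝ) (a / 2), HasDerivAt V (V' ζ) ζ)
    (hineq : ∀ ζ ∈ Set.Ioc (0 : ℝ) (a / 2),
      ((n : ℝ) - C * ζ) * V ζ ≤ ζ * V' ζ)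
    (hlim : Tendsto (fun ε => V ε / ε ^ n) (nhdsWithin 0 (Set.Ioi 0))
      (nhds ωn)) :
    ∀ ζ ∈ Set.Ioc (0 : ℝ) (a / 2),
      V ζ ≥ ωn * ζ ^ n * Real.exp (-C * ζ) := by
  intro ζ0 hζ0
  obtain ⟨hζ0pos, hζ0le⟩ := hζ0
  set g : ℝ → ℝ := fun ζ => V ζ * Real.exp (C * ζ) / ζ ^ n with hg
  -- g has nonnegative derivative on (0, a/2]
  have hgderiv : ∀ ζ ∈ Set.Ioc (0:ℝ) (a/2), ∃ d, HasDerivAt g d ζ ∧ 0 ≤ d := by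
    intro ζ hζ
    have hζpos : 0 < ζ := hζ.1
    have hexp : HasDerivAt (fun x => Real.exp (C * x)) (Real.exp (C * ζ) * C) ζ := by
      have := (Real.hasDerivAt_exp (C * ζ)).comp ζ ((hasDerivAt_id ζ).const_mul C)
      simpa [Function.comp_def] using this
    have hnum : HasDerivAt (fun x => V x * Real.exp (C * x))
        (V' ζ * Real.exp (C * ζ) + V ζ * (Real.exp (C * ζ) * C)) ζ :=
      (hderiv ζ hζ).mul hexp
    have hpow : HasDerivAt (fun x : ℝ => x ^ n) ((n : ℝ) * ζ ^ (n - 1)) ζ :=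
      hasDerivAt_pow n ζ
    have hne : ζ ^ n ≠ 0 := (pow_pos hζpos n).ne'
    have hdiv := hnum.div hpow hne
    refine ⟨_, hdiv, ?_⟩
    apply div_nonneg _ (sq_nonneg _)
    have key : 0 ≤ ζ * V' ζ - ((n : ℝ) - C * ζ) * V ζ :=
      sub_nonneg.2 (hineq ζ hζ)
    have hpn : ζ ^ n = ζ ^ (n - 1) * ζ := by
      rw [← pow_succ, Nat.sub_add_cancel hn]
    have : (V' ζ * Real.exp (C * ζ) + V ζ * (Real.exp (C * ζ) * C)) * ζ ^ n
        - V ζ * Real.exp (C * ζ) * ((n : ℝ) * ζ ^ (n - 1))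
        = Real.exp (C * ζ) * ζ ^ (n - 1) * (ζ * V' ζ - ((n : ℝ) - C * ζ) * V ζ) := by
      rw [hpn]; ring
    rw [this]
    exact mul_nonneg (mul_nonneg (Real.exp_pos _).le (pow_nonneg hζpos.le _)) key
  -- g is monotone on Ioc 0 ζ0, i.e. g ε ≤ g ζ0 for ε ∈ Ioc 0 ζ0
  have hmono : ∀ ε ∈ Set.Ioc (0:ℝ) ζ0, g ε ≤ g ζ0 := by
    intro ε hε
    have hsub : Set.Icc ε ζ0 ⊆ Set.Ioc (0:ℝ) (a/2) := fun x hx =>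
      ⟨lt_of_lt_of_le hε.1 hx.1, le_trans hx.2 hζ0le⟩
    have hmon : MonotoneOn g (Set.Icc ε ζ0) := by
      apply monotoneOn_of_deriv_nonneg (convex_Icc ε ζ0)
      · intro x hx
        obtain ⟨d, hd, _⟩ := hgderiv x (hsub hx)
        exact hd.continuousAt.continuousWithinAt
      · intro x hx
        rw [interior_Icc] at hx
        obtain ⟨d, hd, _⟩ := hgderiv x (hsub ⟨hx.1.le, hx.2.le⟩)
        exact hd.differentiableAt.differentiableWithinAt
      · intro x hx
        rw [interior_Icc] at hx
        obtain ⟨d, hd, hd0⟩ := hgderiv x (hsub ⟨hx.1.le, hx.2.le⟩)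
        rw [hd.deriv]; exact hd0
    exact hmon ⟨le_refl ε, hε.2⟩ ⟨hε.2, le_refl ζ0⟩ hε.2
  -- g tends to ωn at 0+
  have hglim : Tendsto g (nhdsWithin 0 (Set.Ioi 0)) (nhds ωn) := by
    have hexp : Tendsto (fun ε : ℝ => Real.exp (C * ε)) (nhdsWithin 0 (Set.Ioi 0))
        (nhds 1) := by
      have : Continuous (fun ε : ℝ => Real.exp (C * ε)) := by continuity
      have h := (this.tendsto 0).mono_left (nhdsWithin_le_nhds (s := Set.Ioi 0))
      simpa using h
    have := hlim.mul hexp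
    rw [mul_one] at this
    refine this.congr (fun ε => ?_)
    simp only [hg]
    ring
  -- conclude ωn ≤ g ζ0
  have hle : ωn ≤ g ζ0 := by
    refine le_of_tendsto hglim ?_
    filter_upwards [Ioc_mem_nhdsGT_of_mem (Set.mem_Ico.2 ⟨le_refl 0, hζ0pos⟩)]
      with ε hε using hmono ε hε
  -- rearrange
  have h1 : ωn * ζ0 ^ n ≤ V ζ0 * Real.exp (C * ζ0) :=
    (le_div_iff₀ (pow_pos hζ0pos n)).1 hle
  calc ωn * ζ0 ^ n * Real.exp (-C * ζ0)
      ≤ V ζ0 * Real.exp (C * ζ0) * Real.exp (-C * ζ0) :=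
        mul_le_mul_of_nonneg_right h1 (Real.exp_nonneg _)
    _ = V ζ0 := by
        rw [mul_assoc, ← Real.exp_add]
        simp
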